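/- The endomorphism A = S ∘ ⋀^n(J_{2n}) of ⋀^n(ℂ^{2n}) satisfies A ∘ A = id, and the matrix of A in the ordered basis {e_I} is symmetric (equal to its own transpose). -/
import Mathlib


open Matrix

/-- The set of `n`-element subsets of `{1, …, 2n}` (realized as `Fin (2*n)`), indexing the
standard basis `e_I = e_{i₁} ∧ ⋯ ∧ e_{iₙ}` of the `n`-th exterior power `⋀ⁿ(ℂ^{2n})`. -/
abbrev Idx (n : ℕ) := {I : Finset (Fin (2 * n)) // I.card = n}

/-- The matrix of the induced linear map `⋀ⁿ(g)` on `⋀ⁿ(ℂ^{2n})` in the standard basis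
`{e_I}`: its `(I, J)` entry is the `n × n` minor of `g` with rows `I` and columns `J`
(both taken in increasing order), i.e. the coefficient of `e_I` in `⋀ⁿ(g)(e_J)`. -/
noncomputable def wedgePow (n : ℕ) (g : Matrix (Fin (2 * n)) (Fin (2 * n)) ℂ) :
    Matrix (Idx n) (Idx n) ℂ := fun I J =>
  Matrix.det (Matrix.of fun a b : Fin n =>
    g ((I.1.orderIsoOfFin I.2 a).1) ((J.1.orderIsoOfFin J.2 b).1))

/-- `qCoeff n I J = q(e_I, e_J)`, the coefficient of `e_1 ∧ ⋯ ∧ e_{2n}` in `e_I ∧ e_J`: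
it is `0` unless `J = Iᶜ`, in which case it is the sign `(-1)^{#{(i,j) ∈ I × J : i > j}}`
obtained by sorting the concatenation of the increasing enumerations of `I` and `J`. -/
noncomputable def qCoeff (n : ℕ) (I J : Idx n) : ℂ :=
  if (J : Finset (Fin (2 * n))) = (I : Finset (Fin (2 * n)))ᶜ then
    (-1 : ℂ) ^ (((I.1 ×ˢ J.1).filter fun p => p.2 < p.1).card)
  else 0

/-- The bilinear form `q` on `⋀ⁿ(ℂ^{2n})` defined by `v ∧ w = q(v, w) • e_1 ∧ ⋯ ∧ e_{2n}`,
written in coordinates with respect to the basis `{e_I}` (a vector of `⋀ⁿ(ℂ^{2n})` is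
recorded by its coordinate function `Idx n → ℂ`). -/
noncomputable def q (n : ℕ) (v w : Idx n → ℂ) : ℂ :=
  ∑ I : Idx n, ∑ J : Idx n, v I * w J * qCoeff n I J

/-- The basis vector `e_I` of `⋀ⁿ(ℂ^{2n})`, in coordinates. -/
noncomputable def eVec (n : ℕ) (I : Idx n) : Idx n → ℂ :=
  fun J => if J = I then 1 else 0

/-- The complement `Iᶜ` of an `n`-element subset of `{1, …, 2n}`. -/
def complIdx (n : ℕ) (I : Idx n) : Idx n :=
  ⟨(I : Finset (Fin (2 * n)))ᶜ, by
    rw [Finset.card_compl, I.2, Fintype.card_fin]; omega⟩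

/-- The matrix (in the basis `{e_I}`) of the linear map `S` on `⋀ⁿ(ℂ^{2n})` defined by
`S(e_I) = q(e_{Iᶜ}, e_I) • e_{Iᶜ}`. -/
noncomputable def Smat (n : ℕ) : Matrix (Idx n) (Idx n) ℂ := fun I J =>
  if I = complIdx n J then qCoeff n (complIdx n J) J else 0

/-- The `n × n` matrix `w_n` with entries `1` at positions `(i, n+1-i)` and `0` elsewhere. -/
noncomputable def wnMat (n : ℕ) : Matrix (Fin n) (Fin n) ℂ := fun i j =>
  if (i : ℕ) + (j : ℕ) + 1 = n then 1 else 0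

/-- The `2n × 2n` matrix `J_{2n}` with block form `[[0, wₙ], [-wₙ, 0]]`. -/
noncomputable def JMat (n : ℕ) : Matrix (Fin (2 * n)) (Fin (2 * n)) ℂ :=
  Matrix.reindex (finSumFinEquiv.trans (finCongr (by omega)))
    (finSumFinEquiv.trans (finCongr (by omega)))
    (Matrix.fromBlocks 0 (wnMat n) (-(wnMat n)) 0)

/-- The matrix of the endomorphism `A = S ∘ ⋀ⁿ(J_{2n})` of `⋀ⁿ(ℂ^{2n})`. -/
noncomputable def Amat (n : ℕ) : Matrix (Idx n) (Idx n) ℂ :=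
  Smat n * wedgePow n (JMat n)

lemma JMat_apply (n : ℕ) (i j : Fin (2 * n)) :
    JMat n i j = if i = Fin.rev j then (if (j : ℕ) < n then -1 else 1) else 0 := by
  obtain ⟨k, rfl⟩ := (finSumFinEquiv.trans (finCongr (by omega : n + n = 2 * n))).surjective i
  obtain ⟨l, rfl⟩ := (finSumFinEquiv.trans (finCongr (by omega : n + n = 2 * n))).surjective j
  rw [JMat, Matrix.reindex_apply, Matrix.submatrix_apply, Equiv.symm_apply_apply,
    Equiv.symm_apply_apply]
  have hk : ∀ m : Fin n ⊕ Fin n, (((finSumFinEquiv.trans (finCongr (by omega : n + n = 2 * n))) m : Fin (2*n)) : ℕ)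
      = Sum.elim (fun a : Fin n => (a : ℕ)) (fun a : Fin n => n + (a : ℕ)) m := by
    rintro (a | a) <;> simp <;> omega
  rcases k with k | k <;> rcases l with l | l <;>
    simp only [Matrix.fromBlocks_apply₁₁, Matrix.fromBlocks_apply₁₂, Matrix.fromBlocks_apply₂₁,
      Matrix.fromBlocks_apply₂₂, Matrix.zero_apply, Matrix.neg_apply, wnMat, Fin.ext_iff,
      Fin.val_rev, hk, Sum.elim_inl, Sum.elim_inr] <;>
    split_ifs <;> first | rfl | omega | (exfalso; omega) | simp | (push_neg at *; omega)
def sIdx (n : ℕ) (I : Idx n) : Idx n :=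
  ⟨I.1.map (Fin.revPerm : Equiv.Perm (Fin (2 * n))).toEmbedding, by
    rw [Finset.card_map, I.2]⟩

lemma mem_sIdx (n : ℕ) (I : Idx n) (x : Fin (2 * n)) :
    x ∈ (sIdx n I).1 ↔ Fin.rev x ∈ I.1 := by
  simp [sIdx, Finset.mem_map_equiv]

lemma sIdx_sIdx (n : ℕ) (I : Idx n) : sIdx n (sIdx n I) = I := by
  apply Subtype.ext; ext x; simp [mem_sIdx]

lemma complIdx_complIdx (n : ℕ) (I : Idx n) : complIdx n (complIdx n I) = I := by
  apply Subtype.ext; simp [complIdx]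

lemma sIdx_complIdx (n : ℕ) (I : Idx n) :
    sIdx n (complIdx n I) = complIdx n (sIdx n I) := by
  apply Subtype.ext; ext x; simp [mem_sIdx, complIdx]

lemma orderEmb_sIdx (n : ℕ) (J : Idx n) (a : Fin n) :
    (sIdx n J).1.orderEmbOfFin (sIdx n J).2 a
      = Fin.rev (J.1.orderEmbOfFin J.2 (Fin.rev a)) := by
  have key := Finset.orderEmbOfFin_unique (s := (sIdx n J).1) (sIdx n J).2
    (f := fun a : Fin n => Fin.rev (J.1.orderEmbOfFin J.2 (Fin.rev a)))
    (fun a => by rw [mem_sIdx, Fin.rev_rev]; exact Finset.orderEmbOfFin_mem _ _ _)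
    (fun a b hab => by
      simp only [Fin.rev_lt_rev]
      exact (J.1.orderEmbOfFin J.2).strictMono (Fin.rev_lt_rev.mpr hab))
  exact (congrFun key a).symm

lemma wedge_eq_zero (n : ℕ) (I J : Idx n) (h : I ≠ sIdx n J) :
    wedgePow n (JMat n) I J = 0 := by
  -- find an element of I not in sIdx n J
  have hne : I.1 ≠ (sIdx n J).1 := fun hh => h (Subtype.ext hh)
  have hns : ¬ I.1 ⊆ (sIdx n J).1 := by
    intro hsub
    exact hne (Finset.eq_of_subset_of_card_le hsub (by rw [I.2, (sIdx n J).2]))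
  obtain ⟨i, hiI, hiN⟩ := Finset.not_subset.mp hns
  obtain ⟨a, ha⟩ : ∃ a : Fin n, I.1.orderEmbOfFin I.2 a = i := by
    have : i ∈ Set.range (I.1.orderEmbOfFin I.2) := by
      rw [Finset.range_orderEmbOfFin]; exact hiI
    exact this
  apply Matrix.det_eq_zero_of_row_eq_zero a
  intro b
  simp only [Matrix.of_apply, Finset.coe_orderIsoOfFin_apply, ha, JMat_apply]
  rw [if_neg]
  intro hcon
  apply hiN
  rw [mem_sIdx, hcon, Fin.rev_rev]
  exact Finset.orderEmbOfFin_mem _ _ _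

noncomputable def lowSign (n : ℕ) (J : Idx n) : ℂ :=
  (-1) ^ ((Finset.filter (fun j : Fin (2 * n) => (j : ℕ) < n) J.1).card)

lemma wedge_sIdx (n : ℕ) (J : Idx n) :
    wedgePow n (JMat n) (sIdx n J) J
      = ((Equiv.Perm.sign (Fin.revPerm : Equiv.Perm (Fin n)) : ℤ) : ℂ) * lowSign n J := by
  have hM : (Matrix.of fun a b : Fin n =>
      JMat n (((sIdx n J).1.orderIsoOfFin (sIdx n J).2 a).1) ((J.1.orderIsoOfFin J.2 b).1))
      = (Matrix.diagonal (fun b : Fin n =>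
          if ((J.1.orderEmbOfFin J.2 b : Fin (2*n)) : ℕ) < n then (-1 : ℂ) else 1)).submatrix
        (Fin.revPerm : Equiv.Perm (Fin n)) id := by
    ext a b
    simp only [Matrix.of_apply, Finset.coe_orderIsoOfFin_apply, orderEmb_sIdx, JMat_apply,
      Matrix.submatrix_apply, Matrix.diagonal_apply, id_eq, Equiv.coe_fn_mk]
    have hcond : Fin.rev (J.1.orderEmbOfFin J.2 (Fin.rev a)) = Fin.rev (J.1.orderEmbOfFin J.2 b)
        ↔ Fin.revPerm a = b := by
      rw [Fin.rev_inj]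
      constructor
      · intro hh; have := (J.1.orderEmbOfFin J.2).injective hh; simp [← this]
      · rintro rfl; simp
    by_cases hab : Fin.revPerm a = b
    · rw [if_pos (hcond.mpr hab), if_pos hab]
      subst hab
      rfl
    · rw [if_neg (fun hh => hab (hcond.mp hh)), if_neg hab]
  rw [wedgePow, hM, Matrix.det_permute, Matrix.det_diagonal]
  congr 1
  have hprod : (∏ i : Fin n, if ((J.1.orderEmbOfFin J.2 i : Fin (2*n)) : ℕ) < n then (-1:ℂ) else 1)
      = (-1) ^ (Finset.univ.filter
          (fun i : Fin n => ((J.1.orderEmbOfFin J.2 i : Fin (2*n)) : ℕ) < n)).card := by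
    rw [Finset.prod_ite, Finset.prod_const, Finset.prod_const, one_pow, mul_one]
  have hcard : (Finset.univ.filter
        (fun i : Fin n => ((J.1.orderEmbOfFin J.2 i : Fin (2*n)) : ℕ) < n)).card
      = (Finset.filter (fun j : Fin (2*n) => (j:ℕ) < n) J.1).card := by
    apply Finset.card_bij (fun i _ => J.1.orderEmbOfFin J.2 i)
    · intro a ha
      simp only [Finset.mem_filter, Finset.mem_univ, true_and] at *
      exact ⟨Finset.orderEmbOfFin_mem _ _ _, ha⟩
    · intro a _ b _ hab
      exact (J.1.orderEmbOfFin J.2).injective hab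
    · intro j hj
      simp only [Finset.mem_filter] at hj
      obtain ⟨i, hi⟩ : ∃ i, J.1.orderEmbOfFin J.2 i = j := by
        have : j ∈ Set.range (J.1.orderEmbOfFin J.2) := by
          rw [Finset.range_orderEmbOfFin]; exact hj.1
        exact this
      exact ⟨i, Finset.mem_filter.mpr ⟨Finset.mem_univ _, by rw [hi]; exact hj.2⟩, hi⟩
  rw [hprod, hcard, lowSign]

section AuxAmat

variable {n : ℕ}

lemma tau_tau (n : ℕ) (J : Idx n) :
    complIdx n (sIdx n (complIdx n (sIdx n J))) = J := by
  rw [sIdx_complIdx, sIdx_sIdx, complIdx_complIdx]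

lemma qCoeff_compl (n : ℕ) (K : Idx n) :
    qCoeff n (complIdx n K) K
      = (-1 : ℂ) ^ ((((K.1)ᶜ ×ˢ K.1).filter fun p => p.2 < p.1).card) := by
  have hc : (K : Finset (Fin (2 * n))) = ((complIdx n K).1)ᶜ := by simp [complIdx]
  rw [qCoeff, if_pos hc]
  rfl

lemma cNum_eq (n : ℕ) (J : Idx n) :
    ((((sIdx n J).1)ᶜ ×ˢ (sIdx n J).1).filter fun p => p.2 < p.1).card
      = ((((complIdx n J).1)ᶜ ×ˢ (complIdx n J).1).filter fun p => p.2 < p.1).card := by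
  apply Finset.card_bij (fun (p : Fin (2*n) × Fin (2*n)) _ => (Fin.rev p.2, Fin.rev p.1))
  · rintro ⟨x, y⟩ hp
    simp only [Finset.mem_filter, Finset.mem_product, Finset.mem_compl, mem_sIdx, not_not,
      complIdx] at hp ⊢
    obtain ⟨⟨hx, hy⟩, hlt⟩ := hp
    refine ⟨⟨?_, ?_⟩, ?_⟩
    · simpa [Fin.rev_rev] using hy
    · simpa [Fin.rev_rev] using hx
    · exact Fin.rev_lt_rev.mpr hlt
  · rintro ⟨x, y⟩ _ ⟨x', y'⟩ _ hxy
    simp only [Prod.mk.injEq, Fin.rev_inj] at hxy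
    exact Prod.ext hxy.2 hxy.1
  · rintro ⟨i, j⟩ hp
    simp only [Finset.mem_filter, Finset.mem_product, Finset.mem_compl, not_not, complIdx] at hp
    obtain ⟨⟨hi, hj⟩, hlt⟩ := hp
    refine ⟨(Fin.rev j, Fin.rev i), ?_, by simp [Fin.rev_rev]⟩
    simp only [Finset.mem_filter, Finset.mem_product, Finset.mem_compl, mem_sIdx, Fin.rev_rev,
      not_not]
    refine ⟨⟨?_, hi⟩, Fin.rev_lt_rev.mpr hlt⟩
    simpa using hj

lemma card_low_univ (n : ℕ) :
    (Finset.univ.filter (fun j : Fin (2 * n) => (j : ℕ) < n)).card = n := by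
  have : (Finset.univ.filter (fun j : Fin (2 * n) => (j : ℕ) < n))
      = Finset.map (Fin.castLEEmb (by omega : n ≤ 2 * n)) Finset.univ := by
    ext x
    simp only [Finset.mem_filter, Finset.mem_univ, true_and, Finset.mem_map, Fin.castLEEmb]
    constructor
    · intro hx; exact ⟨⟨(x : ℕ), hx⟩, rfl⟩
    · rintro ⟨a, -, rfl⟩; simpa using a.2
  rw [this, Finset.card_map, Finset.card_univ, Fintype.card_fin]

lemma low_eq (n : ℕ) (J : Idx n) :
    lowSign n (complIdx n (sIdx n J)) = lowSign n J := by
  unfold lowSign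
  congr 1
  have hset : (complIdx n (sIdx n J)).1 = (sIdx n (complIdx n J)).1 := by
    rw [sIdx_complIdx]
  rw [hset]
  -- bijection with the high part of Jᶜ
  have h1 : (Finset.filter (fun j : Fin (2 * n) => (j : ℕ) < n) (sIdx n (complIdx n J)).1).card
      = (Finset.filter (fun j : Fin (2 * n) => ¬ (j : ℕ) < n) (complIdx n J).1).card := by
    apply Finset.card_bij (fun (x : Fin (2 * n)) _ => Fin.rev x)
    · intro x hx
      simp only [Finset.mem_filter, mem_sIdx] at hx ⊢
      refine ⟨hx.1, ?_⟩
      have := hx.2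
      have hv : ((Fin.rev x : Fin (2 * n)) : ℕ) = 2 * n - (x + 1) := Fin.val_rev x
      omega
    · intro a _ b _ hab; exact Fin.rev_inj.mp hab
    · intro y hy
      simp only [Finset.mem_filter] at hy
      refine ⟨Fin.rev y, ?_, Fin.rev_rev y⟩
      simp only [Finset.mem_filter, mem_sIdx, Fin.rev_rev]
      refine ⟨hy.1, ?_⟩
      have := hy.2
      have hv : ((Fin.rev y : Fin (2 * n)) : ℕ) = 2 * n - (y + 1) := Fin.val_rev y
      have := y.2
      omega
  rw [h1]
  -- counting
  have hpart1 : (Finset.filter (fun j : Fin (2 * n) => ¬ (j : ℕ) < n) (complIdx n J).1).card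
      + (Finset.filter (fun j : Fin (2 * n) => (j : ℕ) < n) (complIdx n J).1).card
      = (complIdx n J).1.card := by
    rw [add_comm]
    exact Finset.card_filter_add_card_filter_not _
  have hpart2 : (Finset.filter (fun j : Fin (2 * n) => (j : ℕ) < n) (complIdx n J).1).card
      + (Finset.filter (fun j : Fin (2 * n) => (j : ℕ) < n) J.1).card
      = (Finset.univ.filter (fun j : Fin (2 * n) => (j : ℕ) < n)).card := by
    rw [← Finset.card_union_of_disjoint, ← Finset.filter_union]
    · congr 2
      rw [show (complIdx n J).1 = (J.1)ᶜ from rfl]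
      ext x; simp only [Finset.mem_union, Finset.mem_compl, Finset.mem_univ, iff_true]; tauto
    · exact Finset.disjoint_filter_filter
        (by rw [show (complIdx n J).1 = (J.1)ᶜ from rfl]; exact disjoint_compl_left)
  have hc : (complIdx n J).1.card = n := (complIdx n J).2
  have hu := card_low_univ n
  omega

end AuxAmat

noncomputable def aVal (n : ℕ) (J : Idx n) : ℂ :=
  qCoeff n (complIdx n (sIdx n J)) (sIdx n J) * wedgePow n (JMat n) (sIdx n J) J

lemma aVal_tau (n : ℕ) (J : Idx n) :
    aVal n (complIdx n (sIdx n J)) = aVal n J := by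
  unfold aVal
  rw [wedge_sIdx, wedge_sIdx]
  have h1 : sIdx n (complIdx n (sIdx n J)) = complIdx n J := by
    rw [sIdx_complIdx, sIdx_sIdx]
  rw [h1, qCoeff_compl, qCoeff_compl, cNum_eq, low_eq]

lemma aVal_sq (n : ℕ) (J : Idx n) : aVal n J * aVal n J = 1 := by
  have hs : ((Equiv.Perm.sign (Fin.revPerm : Equiv.Perm (Fin n)) : ℤ) : ℂ)
      * ((Equiv.Perm.sign (Fin.revPerm : Equiv.Perm (Fin n)) : ℤ) : ℂ) = 1 := by
    rcases Int.units_eq_one_or (Equiv.Perm.sign (Fin.revPerm : Equiv.Perm (Fin n))) with h | h <;>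
      rw [h] <;> norm_num
  have hneg : ∀ k : ℕ, ((-1 : ℂ)) ^ k * (-1) ^ k = 1 := by
    intro k
    rw [← pow_add, ← two_mul, pow_mul]
    norm_num
  unfold aVal
  rw [qCoeff_compl, wedge_sIdx, lowSign]
  set c := (Finset.filter (fun p => p.2 < p.1) (((sIdx n J).1)ᶜ ×ˢ (sIdx n J).1)).card
  set l := (Finset.filter (fun j : Fin (2 * n) => (j : ℕ) < n) J.1).card
  set s := ((Equiv.Perm.sign (Fin.revPerm : Equiv.Perm (Fin n)) : ℤ) : ℂ)
  calc ((-1 : ℂ) ^ c * (s * (-1) ^ l)) * ((-1) ^ c * (s * (-1) ^ l))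
      = ((-1 : ℂ) ^ c * (-1) ^ c) * ((s * s) * ((-1) ^ l * (-1) ^ l)) := by ring
    _ = 1 := by rw [hneg, hs, hneg]; norm_num

lemma Amat_apply (n : ℕ) (I J : Idx n) :
    Amat n I J = if I = complIdx n (sIdx n J) then aVal n J else 0 := by
  rw [Amat, Matrix.mul_apply, Finset.sum_eq_single (complIdx n I)]
  · rw [Smat, if_pos (complIdx_complIdx n I).symm, complIdx_complIdx]
    by_cases hIJ : I = complIdx n (sIdx n J)
    · rw [if_pos hIJ, hIJ, complIdx_complIdx, aVal]
    · rw [if_neg hIJ, wedge_eq_zero n _ _ (fun hc => hIJ ?_), mul_zero]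
      rw [← hc, complIdx_complIdx]
  · intro K _ hK
    rw [Smat, if_neg, zero_mul]
    intro hcon
    apply hK
    rw [hcon, complIdx_complIdx]
  · intro h; exact absurd (Finset.mem_univ _) h


/-- The endomorphism `A = S ∘ ⋀ⁿ(J_{2n})` of `⋀ⁿ(ℂ^{2n})` satisfies `A ∘ A = id`, and its
matrix in the ordered basis `{e_I}` is symmetric. -/
theorem Amat_sq_and_symm (n : ℕ) (hn : 1 ≤ n) :
    Amat n * Amat n = 1 ∧ (Amat n)ᵀ = Amat n := by
  constructor
  · ext I J
    rw [Matrix.mul_apply, Matrix.one_apply]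
    simp only [Amat_apply]
    rw [Finset.sum_eq_single (complIdx n (sIdx n J))]
    · rw [if_pos rfl, tau_tau]
      by_cases h : I = J
      · rw [if_pos h, if_pos h, aVal_tau, aVal_sq]
      · rw [if_neg h, if_neg h, zero_mul]
    · intro K _ hK
      rw [if_neg hK, mul_zero]
    · intro h; exact absurd (Finset.mem_univ _) h
  · ext I J
    rw [Matrix.transpose_apply, Amat_apply, Amat_apply]
    by_cases h : I = complIdx n (sIdx n J)
    · have h' : J = complIdx n (sIdx n I) := by rw [h, tau_tau]
      rw [if_pos h', if_pos h, h, aVal_tau]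
    · have h' : J ≠ complIdx n (sIdx n I) := fun hc => h (by rw [hc, tau_tau])
      rw [if_neg h', if_neg h]
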